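/- Let T be a tree rooted at r with subtrees R¹,…,R^m after removing r, and suppose every leaf edge of the (contracted) tree T' is covered only by cross-links and every cross-link covers at most one leaf edge of T'. If T' has q leaves, then any feasible fractional solution y' has total weight y'(L) ≥ q, and choosing one cross-link per leaf gives a set of q links covering all of E(T') (because the cross-link instance is star-shaped with hub r). -/
import Mathlib


open SimpleGraph
open scoped Classical

/-- The unique path between two vertices of a tree, as a walk. -/
noncomputable def tpath {V : Type*} (G : SimpleGraph V) (hG : G.IsTree) (u v : V) : G.Walk u v :=
  (hG.existsUnique_path u v).choose

lemma tpath_isPath {V : Type*} {G : SimpleGraph V} (hG : G.IsTree) (u v : V) :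
    (tpath G hG u v).IsPath :=
  (hG.existsUnique_path u v).choose_spec.1

lemma tpath_unique {V : Type*} {G : SimpleGraph V} (hG : G.IsTree) {u v : V}
    (p : G.Walk u v) (hp : p.IsPath) : p = tpath G hG u v :=
  (hG.existsUnique_path u v).choose_spec.2 p hp

lemma tpath_rev {V : Type*} {G : SimpleGraph V} (hG : G.IsTree) (u v : V) :
    tpath G hG u v = (tpath G hG v u).reverse :=
  (tpath_unique hG _ ((tpath_isPath hG v u).reverse)).symm

lemma leaf_endpoint {V : Type*} {G : SimpleGraph V} {u x : V} {a b : V} (p : G.Walk a b)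
    (hp : p.IsPath) (he : s(u, x) ∈ p.edges) (hx : ∀ y, G.Adj u y → y = x) :
    u = a ∨ u = b := by
  induction p with
  | nil => simp at he
  | @cons a c b h q ih =>
    rw [SimpleGraph.Walk.edges_cons, List.mem_cons] at he
    rw [SimpleGraph.Walk.cons_isPath_iff] at hp
    rcases he with he | he
    · rw [Sym2.eq_iff] at he
      rcases he with ⟨rfl, rfl⟩ | ⟨rfl, rfl⟩
      · exact Or.inl rfl
      · cases q with
        | nil => exact Or.inr rfl
        | cons h2 q2 =>
          exfalso
          have hd := hx _ h2
          subst hd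
          apply hp.2
          rw [SimpleGraph.Walk.support_cons]
          exact List.mem_cons_of_mem _ q2.start_mem_support
    · rcases ih hp.1 he with rfl | h1
      · exfalso
        have hxa := hx _ h.symm
        subst hxa
        exact hp.2 (SimpleGraph.Walk.snd_mem_support_of_mem_edges q he)
      · exact Or.inr h1

lemma cross_mem_support {V : Type*} {G : SimpleGraph V} (hG : G.IsTree) {r : V} {a b : V}
    (h1 : a ≠ r) (h2 : b ≠ r) (h3 : ¬ (G.deleteEdges {e | r ∈ e}).Reachable a b) :
    r ∈ (tpath G hG a b).support := by
  by_contra hr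
  apply h3
  refine ⟨(tpath G hG a b).toDeleteEdges _ ?_⟩
  intro e he hre
  apply hr
  induction e with
  | h p q =>
    rcases (Sym2.mem_iff).mp hre with rfl | rfl
    · exact SimpleGraph.Walk.fst_mem_support_of_mem_edges _ he
    · exact SimpleGraph.Walk.snd_mem_support_of_mem_edges _ he

lemma tpath_prefix {V : Type*} {G : SimpleGraph V} (hG : G.IsTree) {a b : V} (r : V)
    (hr : r ∈ (tpath G hG a b).support) :
    ∀ e ∈ (tpath G hG a r).edges, e ∈ (tpath G hG a b).edges := by
  have h1 : ((tpath G hG a b).takeUntil r hr).IsPath := (tpath_isPath hG a b).takeUntil hr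
  rw [← tpath_unique hG _ h1]
  exact fun e he => SimpleGraph.Walk.edges_takeUntil_subset _ hr he

lemma isPath_concat {V : Type*} {G : SimpleGraph V} {a b c : V} {p : G.Walk a b}
    (hp : p.IsPath) (h : G.Adj b c) (hc : c ∉ p.support) : (p.concat h).IsPath := by
  have h1 : (SimpleGraph.Walk.cons h.symm p.reverse).IsPath := by
    rw [SimpleGraph.Walk.cons_isPath_iff]
    exact ⟨hp.reverse, by simpa [SimpleGraph.Walk.support_reverse] using hc⟩
  have h2 := h1.reverse
  rwa [SimpleGraph.Walk.reverse_cons, SimpleGraph.Walk.reverse_reverse] at h2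
lemma edge_on_root_path {V : Type*} {G : SimpleGraph V} (hG : G.IsTree) (r : V) {a b : V}
    (hab : G.Adj a b) :
    s(a, b) ∈ (tpath G hG r a).edges ∨ s(a, b) ∈ (tpath G hG r b).edges := by
  by_cases hb : b ∈ (tpath G hG r a).support
  · left
    have hd : ((tpath G hG r a).dropUntil b hb).IsPath := (tpath_isPath hG r a).dropUntil hb
    have hsingle : (SimpleGraph.Walk.cons hab.symm SimpleGraph.Walk.nil : G.Walk b a).IsPath := by
      simp [hab.symm.ne]
    have heq : (tpath G hG r a).dropUntil b hb =
        SimpleGraph.Walk.cons hab.symm SimpleGraph.Walk.nil :=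
      (tpath_unique hG _ hd).trans (tpath_unique hG _ hsingle).symm
    have hmem : s(a, b) ∈ ((tpath G hG r a).dropUntil b hb).edges := by
      rw [heq]; simp [Sym2.eq_swap]
    exact SimpleGraph.Walk.edges_dropUntil_subset _ hb hmem
  · right
    have hcat : ((tpath G hG r a).concat hab).IsPath :=
      isPath_concat (tpath_isPath hG r a) hab hb
    rw [← tpath_unique hG _ hcat]
    simp [SimpleGraph.Walk.edges_concat]

lemma exists_leaf_path {V : Type*} [Fintype V] [DecidableEq V] (G : SimpleGraph V)
    [DecidableRel G.Adj] (hG : G.IsTree) (r : V) {e : Sym2 V} (he : e ∈ G.edgeSet) :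
    ∃ u, G.degree u = 1 ∧ e ∈ (tpath G hG r u).edges := by
  induction e with
  | h a b =>
    rw [SimpleGraph.mem_edgeSet] at he
    set T : Finset V := Finset.univ.filter (fun u => s(a, b) ∈ (tpath G hG r u).edges) with hT
    have hne : T.Nonempty := by
      rcases edge_on_root_path hG r he with h | h
      · exact ⟨a, by simp [hT, h]⟩
      · exact ⟨b, by simp [hT, h]⟩
    obtain ⟨u, huT, hmax⟩ := T.exists_max_image (fun u => (tpath G hG r u).length) hne
    have hue : s(a, b) ∈ (tpath G hG r u).edges := by
      rw [hT] at huT; exact (Finset.mem_filter.mp huT).2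
    set p := tpath G hG r u with hp
    -- p.reverse is a cons
    have hnn : ¬ p.reverse.Nil := by
      rw [SimpleGraph.Walk.nil_iff_length_eq, SimpleGraph.Walk.length_reverse]
      intro hlen
      have : p.edges = [] := by
        have := SimpleGraph.Walk.length_edges p
        cases hpe : p.edges with
        | nil => rfl
        | cons x l => rw [hpe] at this; rw [← this] at hlen; simp at hlen
      rw [this] at hue; simp at hue
    obtain ⟨x, h, q, hq⟩ := SimpleGraph.Walk.not_nil_iff.mp hnn
    -- h : G.Adj u x
    have hall : ∀ y, G.Adj u y → y = x := by
      intro w hw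
      by_contra hwx
      by_cases hwp : w ∈ p.support
      · -- dropUntil w is the single edge w-u
        have hd : (p.dropUntil w hwp).IsPath := (tpath_isPath hG r u).dropUntil hwp
        have hsingle : (SimpleGraph.Walk.cons hw.symm SimpleGraph.Walk.nil : G.Walk w u).IsPath :=
          by simp [hw.symm.ne]
        have heq : p.dropUntil w hwp = SimpleGraph.Walk.cons hw.symm SimpleGraph.Walk.nil :=
          (tpath_unique hG _ hd).trans (tpath_unique hG _ hsingle).symm
        have hspec := p.take_spec hwp
        have hedges : p.reverse.edges = s(u, w) :: (p.takeUntil w hwp).reverse.edges := by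
          conv_lhs => rw [← hspec]
          rw [SimpleGraph.Walk.reverse_append, heq]
          simp [Sym2.eq_swap]
        rw [hq] at hedges
        simp only [SimpleGraph.Walk.edges_cons, List.cons.injEq] at hedges
        exact hwx (Sym2.congr_right.mp hedges.1.symm)
      · -- extend the path
        have hcat : (p.concat hw).IsPath := isPath_concat (tpath_isPath hG r u) hw hwp
        have hwt : w ∈ T := by
          rw [hT, Finset.mem_filter]
          refine ⟨Finset.mem_univ _, ?_⟩
          rw [← tpath_unique hG _ hcat, SimpleGraph.Walk.edges_concat]
          simp only [List.concat_eq_append, List.mem_append]; exact Or.inl hue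
        have := hmax w hwt
        rw [← tpath_unique hG _ hcat, SimpleGraph.Walk.length_concat] at this
        omega
    refine ⟨u, ?_, hue⟩
    have : G.neighborFinset u = {x} := by
      apply Finset.eq_singleton_iff_unique_mem.mpr
      exact ⟨(SimpleGraph.mem_neighborFinset _ _ _).mpr h,
        fun y hy => hall y ((SimpleGraph.mem_neighborFinset _ _ _).mp hy)⟩
    rw [← SimpleGraph.card_neighborFinset_eq_degree, this, Finset.card_singleton]

/-- `cov(e)`: the links whose tree path contains the edge `e`. -/
noncomputable def covE {V : Type*} (G : SimpleGraph V) (hG : G.IsTree) (e : Sym2 V) :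
    Set (V × V) := {ℓ | e ∈ (tpath G hG ℓ.1 ℓ.2).edges}

/-- A cross-link w.r.t. the root `r`: its endpoints lie in two different components of
`T − r` (so its tree path passes through `r`). -/
def CrossLink {V : Type*} (G : SimpleGraph V) (r : V) (ℓ : V × V) : Prop :=
  ℓ.1 ≠ r ∧ ℓ.2 ≠ r ∧ ¬ (G.deleteEdges {e | r ∈ e}).Reachable ℓ.1 ℓ.2

/-- A leaf edge: an edge incident to a vertex of degree `1`. -/
def IsLeafEdge {V : Type*} [Fintype V] [DecidableEq V] (G : SimpleGraph V)
    [DecidableRel G.Adj] (e : Sym2 V) : Prop :=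
  e ∈ G.edgeSet ∧ ∃ u ∈ e, G.degree u = 1

/-- Suppose every leaf edge of the tree `T'` is covered (in the
support of the feasible fractional solution `y'`) only by cross-links, and every
cross-link covers at most one leaf edge.  If `T'` has `q` leaves, then `y'(L) ≥ q`,
and one can choose one cross-link per leaf to obtain a set of `q` cross-links covering
all edges of `T'` (the cross-link instance being star-shaped with hub `r`). -/
theorem leaf_crosslink_rounding {V : Type*} [Fintype V] [DecidableEq V]
    (G : SimpleGraph V) [DecidableRel G.Adj] (hG : G.IsTree) (r : V)
    (L : Finset (V × V)) (y : V × V → ℝ)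
    (hy0 : ∀ ℓ, 0 ≤ y ℓ) (hysupp : ∀ ℓ ∉ L, y ℓ = 0)
    (hfeas : ∀ e ∈ G.edgeSet, 1 ≤ ∑ ℓ ∈ L.filter (· ∈ covE G hG e), y ℓ)
    (honlycross : ∀ e, IsLeafEdge G e → ∀ ℓ ∈ L, y ℓ ≠ 0 →
      e ∈ (tpath G hG ℓ.1 ℓ.2).edges → CrossLink G r ℓ)
    (honeleaf : ∀ ℓ ∈ L, CrossLink G r ℓ →
      (G.edgeFinset.filter (fun e => IsLeafEdge G e ∧
        e ∈ (tpath G hG ℓ.1 ℓ.2).edges)).card ≤ 1)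
    (q : ℕ) (hq : q = (Finset.univ.filter (fun v => G.degree v = 1)).card) :
    (q : ℝ) ≤ ∑ ℓ ∈ L, y ℓ ∧
    ∃ S ⊆ L, S.card = q ∧ (∀ ℓ ∈ S, CrossLink G r ℓ) ∧
      ∀ e ∈ G.edgeSet, ∃ ℓ ∈ S, e ∈ (tpath G hG ℓ.1 ℓ.2).edges := by
  classical
  -- the unique neighbor of a leaf
  have hnbE : ∀ v : V, ∃ x, G.degree v = 1 → G.Adj v x ∧ ∀ y, G.Adj v y → y = x := by
    intro v
    by_cases hv : G.degree v = 1
    · rw [← SimpleGraph.card_neighborFinset_eq_degree] at hv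
      obtain ⟨x, hx⟩ := Finset.card_eq_one.mp hv
      refine ⟨x, fun _ => ⟨?_, fun y hy => ?_⟩⟩
      · rw [← SimpleGraph.mem_neighborFinset, hx]; exact Finset.mem_singleton_self x
      · rw [← SimpleGraph.mem_neighborFinset, hx, Finset.mem_singleton] at hy; exact hy
    · exact ⟨v, fun h => absurd h hv⟩
  choose nb hnb using hnbE
  have hE : ∀ v, G.degree v = 1 → s(v, nb v) ∈ G.edgeSet := fun v hv =>
    (SimpleGraph.mem_edgeSet G).mpr (hnb v hv).1
  have hleafedge : ∀ v, G.degree v = 1 → IsLeafEdge G s(v, nb v) := fun v hv =>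
    ⟨hE v hv, v, Sym2.mem_mk_left _ _, hv⟩
  -- existence of a covering link with nonzero weight
  have hex : ∀ v, G.degree v = 1 →
      ∃ ℓ ∈ L, y ℓ ≠ 0 ∧ s(v, nb v) ∈ (tpath G hG ℓ.1 ℓ.2).edges := by
    intro v hv
    by_contra hno
    push_neg at hno
    have h1 := hfeas _ (hE v hv)
    have h0 : ∑ ℓ ∈ L.filter (· ∈ covE G hG s(v, nb v)), y ℓ = 0 := by
      apply Finset.sum_eq_zero
      intro ℓ hℓ
      rw [Finset.mem_filter] at hℓ
      have hcov : s(v, nb v) ∈ (tpath G hG ℓ.1 ℓ.2).edges := hℓ.2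
      by_contra hyne
      exact (hno ℓ hℓ.1 hyne) hcov
    rw [h0] at h1; linarith
  -- the key injectivity lemma
  have hkey : ∀ v w ℓ, G.degree v = 1 → G.degree w = 1 → ℓ ∈ L → y ℓ ≠ 0 →
      s(v, nb v) ∈ (tpath G hG ℓ.1 ℓ.2).edges →
      s(w, nb w) ∈ (tpath G hG ℓ.1 ℓ.2).edges → v = w := by
    intro v w ℓ hv hw hL hy hev hew
    have hcross := honlycross _ (hleafedge v hv) ℓ hL hy hev
    have hone := honeleaf ℓ hL hcross
    have heq : s(v, nb v) = s(w, nb w) := by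
      have h1 : s(v, nb v) ∈ G.edgeFinset.filter (fun e => IsLeafEdge G e ∧
          e ∈ (tpath G hG ℓ.1 ℓ.2).edges) :=
        Finset.mem_filter.mpr ⟨SimpleGraph.mem_edgeFinset.mpr (hE v hv), hleafedge v hv, hev⟩
      have h2 : s(w, nb w) ∈ G.edgeFinset.filter (fun e => IsLeafEdge G e ∧
          e ∈ (tpath G hG ℓ.1 ℓ.2).edges) :=
        Finset.mem_filter.mpr ⟨SimpleGraph.mem_edgeFinset.mpr (hE w hw), hleafedge w hw, hew⟩
      exact Finset.card_le_one.mp hone _ h1 _ h2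
    have hv_mem : v = w ∨ v = nb w := by
      have hvm : v ∈ (s(w, nb w) : Sym2 V) := heq ▸ Sym2.mem_mk_left v (nb v)
      rwa [Sym2.mem_iff] at hvm
    rcases hv_mem with h | h
    · exact h
    · by_contra hvw
      have hadj : G.Adj w v := h ▸ (hnb w hw).1
      have hvp := leaf_endpoint _ (tpath_isPath hG ℓ.1 ℓ.2) hev (hnb v hv).2
      have hwp := leaf_endpoint _ (tpath_isPath hG ℓ.1 ℓ.2) hew (hnb w hw).2
      obtain ⟨h1r, h2r, hreach⟩ := hcross
      apply hreach
      have hadj2 : (G.deleteEdges {e | r ∈ e}).Adj ℓ.1 ℓ.2 := by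
        rw [SimpleGraph.deleteEdges_adj]
        rcases hvp with h1 | h1 <;> rcases hwp with h2 | h2
        · exact absurd (h1.trans h2.symm) hvw
        · refine ⟨h1 ▸ h2 ▸ hadj.symm, ?_⟩
          intro hrmem
          rw [Set.mem_setOf_eq, Sym2.mem_iff] at hrmem
          rcases hrmem with h' | h' <;> [exact h1r h'.symm; exact h2r h'.symm]
        · refine ⟨h2 ▸ h1 ▸ hadj, ?_⟩
          intro hrmem
          rw [Set.mem_setOf_eq, Sym2.mem_iff] at hrmem
          rcases hrmem with h' | h' <;> [exact h1r h'.symm; exact h2r h'.symm]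
        · exact absurd (h1.trans h2.symm) hvw
      exact hadj2.reachable
  set Lv : Finset V := Finset.univ.filter (fun v => G.degree v = 1) with hLv
  have hdegLv : ∀ v ∈ Lv, G.degree v = 1 := fun v hv => (Finset.mem_filter.mp hv).2
  constructor
  · -- the LP bound
    set Sv : V → Finset (V × V) := fun v =>
      L.filter (fun ℓ => s(v, nb v) ∈ (tpath G hG ℓ.1 ℓ.2).edges ∧ y ℓ ≠ 0) with hSv
    have hsub : ∀ v ∈ Lv, (1 : ℝ) ≤ ∑ ℓ ∈ Sv v, y ℓ := by
      intro v hv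
      have hv1 := hdegLv v hv
      have h1 := hfeas _ (hE v hv1)
      refine le_trans h1 (le_of_eq ?_)
      refine (Finset.sum_subset ?_ ?_).symm
      · intro ℓ hℓ
        rw [hSv, Finset.mem_filter] at hℓ
        refine Finset.mem_filter.mpr ⟨hℓ.1, ?_⟩
        exact hℓ.2.1
      · intro ℓ hℓ hℓ2
        rw [Finset.mem_filter] at hℓ
        have hc : s(v, nb v) ∈ (tpath G hG ℓ.1 ℓ.2).edges := hℓ.2
        by_contra hy
        exact hℓ2 (Finset.mem_filter.mpr ⟨hℓ.1, hc, hy⟩)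
    have hdisj : (Lv : Set V).PairwiseDisjoint Sv := by
      intro v hv w hw hvw
      simp only [Function.onFun]
      rw [Finset.disjoint_left]
      intro ℓ hℓv hℓw
      rw [hSv, Finset.mem_filter] at hℓv hℓw
      exact hvw (hkey v w ℓ (hdegLv v hv) (hdegLv w hw) hℓv.1 hℓv.2.2 hℓv.2.1 hℓw.2.1)
    calc (q : ℝ) = ∑ _v ∈ Lv, (1 : ℝ) := by rw [hq]; simp
      _ ≤ ∑ v ∈ Lv, ∑ ℓ ∈ Sv v, y ℓ := Finset.sum_le_sum hsub
      _ = ∑ ℓ ∈ Lv.biUnion Sv, y ℓ := (Finset.sum_biUnion hdisj).symm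
      _ ≤ ∑ ℓ ∈ L, y ℓ := by
          apply Finset.sum_le_sum_of_subset_of_nonneg
          · intro ℓ hℓ
            obtain ⟨v, _, hℓv⟩ := Finset.mem_biUnion.mp hℓ
            exact Finset.filter_subset _ _ hℓv
          · exact fun ℓ _ _ => hy0 ℓ
  · -- the rounding
    have hex' : ∀ v : V, ∃ ℓ, G.degree v = 1 →
        ℓ ∈ L ∧ y ℓ ≠ 0 ∧ s(v, nb v) ∈ (tpath G hG ℓ.1 ℓ.2).edges := by
      intro v
      by_cases hv : G.degree v = 1
      · obtain ⟨ℓ, h1, h2, h3⟩ := hex v hv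
        exact ⟨ℓ, fun _ => ⟨h1, h2, h3⟩⟩
      · exact ⟨(r, r), fun h => absurd h hv⟩
    choose pick hpick using hex'
    refine ⟨Lv.image pick, ?_, ?_, ?_, ?_⟩
    · intro ℓ hℓ
      obtain ⟨v, hv, rfl⟩ := Finset.mem_image.mp hℓ
      exact (hpick v (hdegLv v hv)).1
    · rw [Finset.card_image_of_injOn, hq]
      intro v hv w hw hvw
      have hv1 := hdegLv v hv
      have hw1 := hdegLv w hw
      exact hkey v w (pick v) hv1 hw1 (hpick v hv1).1 (hpick v hv1).2.1
        (hpick v hv1).2.2 (hvw ▸ (hpick w hw1).2.2)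
    · intro ℓ hℓ
      obtain ⟨v, hv, rfl⟩ := Finset.mem_image.mp hℓ
      have hv1 := hdegLv v hv
      exact honlycross _ (hleafedge v hv1) _ (hpick v hv1).1 (hpick v hv1).2.1
        (hpick v hv1).2.2
    · intro e he
      obtain ⟨u, hu, hue⟩ := exists_leaf_path G hG r he
      refine ⟨pick u, Finset.mem_image_of_mem _ (Finset.mem_filter.mpr ⟨Finset.mem_univ _, hu⟩), ?_⟩
      have hℓ := hpick u hu
      have hcross := honlycross _ (hleafedge u hu) _ hℓ.1 hℓ.2.1 hℓ.2.2
      obtain ⟨h1r, h2r, hreach⟩ := hcross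
      have hrsup : r ∈ (tpath G hG (pick u).1 (pick u).2).support :=
        cross_mem_support hG h1r h2r hreach
      have hup : u = (pick u).1 ∨ u = (pick u).2 :=
        leaf_endpoint _ (tpath_isPath hG _ _) hℓ.2.2 (hnb u hu).2
      rcases hup with h | h
      · apply tpath_prefix hG r hrsup
        rw [tpath_rev hG _ r, SimpleGraph.Walk.edges_reverse, List.mem_reverse]
        exact h ▸ hue
      · have hrsup2 : r ∈ (tpath G hG (pick u).2 (pick u).1).support := by
          rw [tpath_rev hG (pick u).2 (pick u).1, SimpleGraph.Walk.support_reverse,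
            List.mem_reverse]
          exact hrsup
        have h2 : e ∈ (tpath G hG (pick u).2 r).edges := by
          rw [tpath_rev hG _ r, SimpleGraph.Walk.edges_reverse, List.mem_reverse]
          exact h ▸ hue
        have h3 := tpath_prefix hG r hrsup2 _ h2
        rw [tpath_rev hG (pick u).2 (pick u).1, SimpleGraph.Walk.edges_reverse,
          List.mem_reverse] at h3
        exact h3
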